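/- Let H be a ℤ-graded bialgebra over a field k satisfying the twisting conditions and α = {α_i}_{i∈ℤ} a system of twisting functionals on H with convolution inverses {α_i^{-1}}. Let A be a ℤ-graded k-algebra and ρ : A → A⊗H a k-algebra homomorphism (ρ(1) = 1⊗1 and ρ(ab) = ρ(a)ρ(b)) such that (id_A⊗ε)∘ρ = id_A, (ρ⊗id_H)∘ρ = (id_A⊗Δ)∘ρ, and ρ(A_n) ⊆ A_n⊗H_n for all n ∈ ℤ. Define τ_i : A → A by τ_i(a) = Σ a_0·α_i(a_1), where ρ(a) = Σ a_0⊗a_1. Then {τ_i}_{i∈ℤ} is a twisting system of A, and each τ_i is bijective with inverse a ↦ Σ a_0·α_i^{-1}(a_1). -/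
import Mathlib


open TensorProduct
set_option maxHeartbeats 1000000
set_option synthInstance.maxHeartbeats 400000

/-- Convolution product of linear functionals on a coalgebra. -/
noncomputable def conv {k B : Type*} [CommSemiring k] [AddCommMonoid B] [Module k B]
    [Coalgebra k B] (f g : B →ₗ[k] k) : B →ₗ[k] k :=
  LinearMap.mul' k k ∘ₗ TensorProduct.map f g ∘ₗ Coalgebra.comul

/-- A twisting system of a ℤ-graded algebra. -/
def IsTwistingSystem {k A : Type*} [CommSemiring k] [Semiring A] [Algebra k A]
    (𝒜 : ℤ → Submodule k A) (τ : ℤ → (A →ₗ[k] A)) : Prop :=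
  (∀ i : ℤ, Function.Bijective (τ i)) ∧
  (∀ (i n : ℤ), ∀ a ∈ 𝒜 n, τ i a ∈ 𝒜 n) ∧
  (τ 0 = LinearMap.id) ∧
  (∀ i : ℤ, τ i 1 = 1) ∧
  (∀ (i j : ℤ), ∀ a ∈ 𝒜 j, ∀ b : A, τ i (a * τ j b) = τ i a * τ (i + j) b)

/-- The map `a ↦ Σ a_0 · π(a_1)` built from a coaction `ρ : A → A ⊗ H` and a functional
`π : H → k`. -/
noncomputable def coactTwist {k H A : Type*} [CommSemiring k] [AddCommMonoid H] [Module k H]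
    [AddCommMonoid A] [Module k A] (ρ : A →ₗ[k] A ⊗[k] H) (π : H →ₗ[k] k) : A →ₗ[k] A :=
  (TensorProduct.rid k A).toLinearMap ∘ₗ TensorProduct.map LinearMap.id π ∘ₗ ρ

/-- Auxiliary: the map `m ⊗ h ↦ π(h) • m`. -/
noncomputable def Tmap {k H M : Type*} [CommSemiring k] [AddCommMonoid H] [Module k H]
    [AddCommMonoid M] [Module k M] (π : H →ₗ[k] k) : M ⊗[k] H →ₗ[k] M :=
  (TensorProduct.rid k M).toLinearMap ∘ₗ TensorProduct.map LinearMap.id π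

@[simp] lemma Tmap_tmul {k H M : Type*} [CommSemiring k] [AddCommMonoid H] [Module k H]
    [AddCommMonoid M] [Module k M] (π : H →ₗ[k] k) (x : M) (h : H) :
    Tmap π (x ⊗ₜ h) = π h • x := by
  simp [Tmap]

lemma coactTwist_eq {k H A : Type*} [CommSemiring k] [AddCommMonoid H] [Module k H]
    [AddCommMonoid A] [Module k A] (ρ : A →ₗ[k] A ⊗[k] H) (π : H →ₗ[k] k) :
    coactTwist ρ π = Tmap π ∘ₗ ρ := rfl

section Aux

variable {k H A : Type*} [Field k] [Ring H] [Bialgebra k H] [Ring A] [Algebra k A]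

lemma Tmap_assoc (π π' : H →ₗ[k] k) (s : A ⊗[k] H) (h : H) :
    Tmap (LinearMap.mul' k k ∘ₗ TensorProduct.map π π')
        ((TensorProduct.assoc k A H H) (s ⊗ₜ h)) = π' h • Tmap π s := by
  induction s using TensorProduct.induction_on with
  | zero => simp
  | tmul y g => simp [smul_smul, mul_comm]
  | add u v hu hv => simp [add_tmul, hu, hv]

lemma rho_Tmap (ρ : A →ₐ[k] A ⊗[k] H) (π : H →ₗ[k] k) :
    ρ.toLinearMap ∘ₗ Tmap π = Tmap π ∘ₗ TensorProduct.map ρ.toLinearMap LinearMap.id := by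
  apply TensorProduct.ext'
  intro x h
  simp

lemma comp_coactTwist (ρ : A →ₐ[k] A ⊗[k] H)
    (hcoassoc : ∀ a : A,
      (TensorProduct.assoc k A H H) ((TensorProduct.map ρ.toLinearMap LinearMap.id) (ρ a)) =
        (TensorProduct.map LinearMap.id Coalgebra.comul) (ρ a))
    (π π' : H →ₗ[k] k) :
    coactTwist ρ.toLinearMap π ∘ₗ coactTwist ρ.toLinearMap π' =
      coactTwist ρ.toLinearMap (conv π π') := by
  have key : ∀ t : A ⊗[k] H,
      Tmap π (ρ (Tmap π' t)) =
        Tmap (LinearMap.mul' k k ∘ₗ TensorProduct.map π π')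
          ((TensorProduct.assoc k A H H) (TensorProduct.map ρ.toLinearMap LinearMap.id t)) := by
    intro t
    induction t using TensorProduct.induction_on with
    | zero => simp
    | tmul x h => simp [Tmap_assoc]
    | add u v hu hv => simp [map_add, hu, hv]
  have key2 : ∀ t : A ⊗[k] H,
      Tmap (LinearMap.mul' k k ∘ₗ TensorProduct.map π π')
          ((TensorProduct.map LinearMap.id Coalgebra.comul) t) = Tmap (conv π π') t := by
    intro t
    induction t using TensorProduct.induction_on with
    | zero => simp
    | tmul x h => simp [conv]
    | add u v hu hv => simp [map_add, hu, hv]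
  ext a
  simp only [LinearMap.comp_apply, coactTwist_eq, AlgHom.toLinearMap_apply]
  rw [key, hcoassoc, key2]

lemma twist_rel (ℋ : ℤ → Submodule k H) (𝒜 : ℤ → Submodule k A)
    (α : ℤ → (H →ₗ[k] k)) (i j : ℤ)
    (hsys : ∀ g ∈ ℋ j, ∀ b : H,
      conv ((α i) ∘ₗ LinearMap.mulLeft k g) (α j) b = α i g * α (i + j) b)
    (s : ↥(𝒜 j) ⊗[k] ↥(ℋ j)) (u : A ⊗[k] H) :
    Tmap (α i) ((TensorProduct.map (𝒜 j).subtype (ℋ j).subtype s) *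
        Tmap (α j) ((TensorProduct.assoc k A H H).symm
          (TensorProduct.map LinearMap.id Coalgebra.comul u))) =
      Tmap (α i) (TensorProduct.map (𝒜 j).subtype (ℋ j).subtype s) * Tmap (α (i + j)) u := by
  induction s using TensorProduct.induction_on with
  | zero => simp
  | add s₁ s₂ h₁ h₂ => simp [map_add, add_mul, h₁, h₂]
  | tmul x g =>
    induction u using TensorProduct.induction_on with
    | zero => simp
    | add u₁ u₂ h₁ h₂ => simp only [map_add, mul_add] at h₁ h₂ ⊢; rw [h₁, h₂]
    | tmul y h =>
      have D : ∀ w : H ⊗[k] H,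
          Tmap (α i) (((x : A) ⊗ₜ[k] (g : H)) *
              Tmap (α j) ((TensorProduct.assoc k A H H).symm (y ⊗ₜ w))) =
            ((LinearMap.mul' k k ∘ₗ
              TensorProduct.map ((α i) ∘ₗ LinearMap.mulLeft k (g : H)) (α j)) w) •
              ((x : A) * y) := by
        intro w
        induction w using TensorProduct.induction_on with
        | zero => simp
        | add w₁ w₂ h₁ h₂ => simp only [map_add, tmul_add, mul_add, add_smul] at h₁ h₂ ⊢;
                             rw [h₁, h₂]
        | tmul p q =>
          rw [TensorProduct.assoc_symm_tmul]
          simp [Algebra.TensorProduct.tmul_mul_tmul, mul_smul_comm, smul_smul, mul_comm]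
      simp only [TensorProduct.map_tmul, Submodule.subtype_apply, LinearMap.id_coe, id_eq]
      rw [D (Coalgebra.comul h)]
      have : (LinearMap.mul' k k ∘ₗ
          TensorProduct.map ((α i) ∘ₗ LinearMap.mulLeft k (g : H)) (α j)) (Coalgebra.comul h)
          = conv ((α i) ∘ₗ LinearMap.mulLeft k (g : H)) (α j) h := rfl
      rw [this, hsys (g : H) g.2 h]
      simp [smul_smul, smul_mul_assoc, mul_smul_comm, mul_comm]

end Aux

/-- Let `H` be a ℤ-graded bialgebra satisfying the twisting conditions,
`α` a system of twisting functionals on `H` with convolution inverses `αinv`, and `A` a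
ℤ-graded `H`-comodule algebra via `ρ` (an algebra map, counital, coassociative, preserving
the grading).  Then `τ_i(a) = Σ a_0 α_i(a_1)` defines a twisting system of `A`, each `τ_i`
bijective with inverse `a ↦ Σ a_0 αinv_i(a_1)`. -/
theorem statement15 {k H A : Type*} [Field k] [Ring H] [Bialgebra k H]
    [Ring A] [Algebra k A]
    (ℋ : ℤ → Submodule k H) [GradedAlgebra ℋ]
    (hT2 : ∀ n : ℤ, ∀ b ∈ ℋ n,
      Coalgebra.comul (R := k) b ∈ LinearMap.range (TensorProduct.mapIncl (ℋ n) (ℋ n)))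
    (α αinv : ℤ → (H →ₗ[k] k))
    (hinv : ∀ i : ℤ, conv (α i) (αinv i) = Coalgebra.counit ∧
      conv (αinv i) (α i) = Coalgebra.counit)
    (hone : ∀ i : ℤ, α i 1 = 1)
    (hzero : α 0 = Coalgebra.counit)
    (hsys : ∀ (i j : ℤ), ∀ a ∈ ℋ j, ∀ b : H,
      conv ((α i) ∘ₗ LinearMap.mulLeft k a) (α j) b = α i a * α (i + j) b)
    (𝒜 : ℤ → Submodule k A) [GradedAlgebra 𝒜]
    (ρ : A →ₐ[k] A ⊗[k] H)
    (hcounit : ∀ a : A,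
      (TensorProduct.rid k A) ((TensorProduct.map LinearMap.id Coalgebra.counit) (ρ a)) = a)
    (hcoassoc : ∀ a : A,
      (TensorProduct.assoc k A H H) ((TensorProduct.map ρ.toLinearMap LinearMap.id) (ρ a)) =
        (TensorProduct.map LinearMap.id Coalgebra.comul) (ρ a))
    (hgr : ∀ n : ℤ, ∀ a ∈ 𝒜 n,
      ρ a ∈ LinearMap.range (TensorProduct.map (𝒜 n).subtype (ℋ n).subtype)) :
    IsTwistingSystem 𝒜 (fun i => coactTwist ρ.toLinearMap (α i)) ∧
    (∀ i : ℤ,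
      coactTwist ρ.toLinearMap (α i) ∘ₗ coactTwist ρ.toLinearMap (αinv i) = LinearMap.id ∧
      coactTwist ρ.toLinearMap (αinv i) ∘ₗ coactTwist ρ.toLinearMap (α i) = LinearMap.id) := by
  have hcu : coactTwist ρ.toLinearMap (Coalgebra.counit) = LinearMap.id := by
    ext a; exact hcounit a
  have hinvpair : ∀ i : ℤ,
      coactTwist ρ.toLinearMap (α i) ∘ₗ coactTwist ρ.toLinearMap (αinv i) = LinearMap.id ∧
      coactTwist ρ.toLinearMap (αinv i) ∘ₗ coactTwist ρ.toLinearMap (α i) = LinearMap.id := by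
    intro i
    constructor
    · rw [comp_coactTwist ρ hcoassoc, (hinv i).1, hcu]
    · rw [comp_coactTwist ρ hcoassoc, (hinv i).2, hcu]
  refine ⟨⟨?_, ?_, ?_, ?_, ?_⟩, hinvpair⟩
  · -- bijectivity
    intro i
    refine Function.bijective_iff_has_inverse.mpr
      ⟨coactTwist ρ.toLinearMap (αinv i), fun a => ?_, fun a => ?_⟩
    · exact LinearMap.congr_fun (hinvpair i).2 a
    · exact LinearMap.congr_fun (hinvpair i).1 a
  · -- grading
    intro i n a ha
    obtain ⟨s, hs⟩ := hgr n a ha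
    show coactTwist ρ.toLinearMap (α i) a ∈ 𝒜 n
    rw [coactTwist_eq, LinearMap.comp_apply, AlgHom.toLinearMap_apply, ← hs]
    clear hs
    induction s using TensorProduct.induction_on with
    | zero => simpa using (𝒜 n).zero_mem
    | tmul x h =>
      simp only [TensorProduct.map_tmul, Submodule.subtype_apply, Tmap_tmul]
      exact (𝒜 n).smul_mem _ x.2
    | add u v hu hv =>
      rw [map_add, map_add]
      exact (𝒜 n).add_mem hu hv
  · -- τ 0 = id
    ext a
    simp only [hzero]
    exact hcounit a
  · -- τ i 1 = 1
    intro i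
    have : ρ (1 : A) = (1 : A) ⊗ₜ[k] (1 : H) := by
      rw [map_one]; rfl
    simp only [coactTwist_eq, LinearMap.comp_apply, AlgHom.toLinearMap_apply, this, Tmap_tmul,
      hone i, one_smul]
  · -- twisting relation
    intro i j a ha b
    obtain ⟨s, hs⟩ := hgr j a ha
    have hρτ : ρ (Tmap (α j) (ρ b)) =
        Tmap (α j) ((TensorProduct.assoc k A H H).symm
          (TensorProduct.map LinearMap.id Coalgebra.comul (ρ b))) := by
      have h1 := LinearMap.congr_fun (rho_Tmap ρ (α j)) (ρ b)
      simp only [LinearMap.comp_apply, AlgHom.toLinearMap_apply] at h1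
      have h2 : (TensorProduct.map ρ.toLinearMap LinearMap.id) (ρ b) =
          (TensorProduct.assoc k A H H).symm
            ((TensorProduct.map LinearMap.id Coalgebra.comul) (ρ b)) := by
        rw [← hcoassoc b, LinearEquiv.symm_apply_apply]
      rw [h1, h2]
    simp only [coactTwist_eq, LinearMap.comp_apply, AlgHom.toLinearMap_apply]
    rw [map_mul, hρτ, ← hs, twist_rel ℋ 𝒜 α i j (hsys i j)]
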